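/- arXiv:2011.09885 — 2 statements merged into one kernel-verified Lean document; each statement's English description precedes it below -/
import Mathlib

section
/- For every natural number N ≥ 1, if x ∈ [0, 10^{-6} N^{-1}] and t ∈ [0, 10^{-6} N^{-2}], then |w_N(x,t)| ≥ N/2. In particular sup_{0<t<1}|w_N(x,t)| ≥ N/2 for every x ∈ [0, 10^{-6} N^{-1}], so the exponent 3/4 in the L^4 maximal estimate for quadratic Weyl sums cannot be improved. -/
open Real Set

/-- The quadratic Weyl sum `w_N(x,t) = Σ_{n=1}^N e^{2πi(nx + n²t)}`. -/
noncomputable def weylSum (N : ℕ) (x t : ℝ) : ℂ :=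
  ∑ n ∈ Finset.Icc 1 N, Complex.exp (2 * Real.pi * Complex.I * (n * x + n ^ 2 * t))

lemma weylSum_eq (N : ℕ) (x t : ℝ) :
    weylSum N x t = ∑ n ∈ Finset.Icc 1 N,
      Complex.exp (((2 * Real.pi * (n * x + n ^ 2 * t) : ℝ) : ℂ) * Complex.I) := by
  unfold weylSum
  refine Finset.sum_congr rfl fun n _ => ?_
  push_cast
  ring_nf

lemma weylSum_abs_le (N : ℕ) (x t : ℝ) : ‖weylSum N x t‖ ≤ N := by
  rw [weylSum_eq]
  calc ‖∑ n ∈ Finset.Icc 1 N,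
        Complex.exp (((2 * Real.pi * (n * x + n ^ 2 * t) : ℝ) : ℂ) * Complex.I)‖
      ≤ ∑ n ∈ Finset.Icc 1 N, ‖
        (Complex.exp (((2 * Real.pi * (n * x + n ^ 2 * t) : ℝ) : ℂ) * Complex.I))‖ :=
        norm_sum_le _ _
    _ = ∑ n ∈ Finset.Icc 1 N, 1 := by
        refine Finset.sum_congr rfl fun n _ => ?_
        exact Complex.norm_exp_ofReal_mul_I _
    _ ≤ N := by simp [Nat.card_Icc]

lemma weylSum_large (N : ℕ) (hN : 1 ≤ N) {x t : ℝ} (hx0 : 0 ≤ x)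
    (hx : x ≤ (10:ℝ) ^ (-6 : ℤ) * (N : ℝ)⁻¹) (ht0 : 0 ≤ t)
    (ht : t ≤ (10:ℝ) ^ (-6 : ℤ) * ((N : ℝ) ^ 2)⁻¹) :
    (N : ℝ) / 2 ≤ ‖weylSum N x t‖ := by
  have hNpos : (0:ℝ) < N := by exact_mod_cast hN
  have hre : (weylSum N x t).re
      = ∑ n ∈ Finset.Icc 1 N, Real.cos (2 * Real.pi * (n * x + n ^ 2 * t)) := by
    rw [weylSum_eq, Complex.re_sum]
    exact Finset.sum_congr rfl fun n _ => Complex.exp_ofReal_mul_I_re _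
  have hx' : x ≤ (10:ℝ) ^ (-6 : ℤ) / N := by rw [div_eq_mul_inv]; exact hx
  have ht' : t ≤ (10:ℝ) ^ (-6 : ℤ) / (N:ℝ)^2 := by rw [div_eq_mul_inv]; exact ht
  have key : ∀ n ∈ Finset.Icc 1 N, (1:ℝ)/2 ≤ Real.cos (2 * Real.pi * (n * x + n ^ 2 * t)) := by
    intro n hn
    rw [Finset.mem_Icc] at hn
    have hn1 : (1:ℝ) ≤ n := by exact_mod_cast hn.1
    have hnN : (n:ℝ) ≤ N := by exact_mod_cast hn.2
    have hθ0 : 0 ≤ 2 * Real.pi * (n * x + n ^ 2 * t) := by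
      have := Real.pi_pos
      have h1 : 0 ≤ (n:ℝ) * x := mul_nonneg (by positivity) hx0
      have h2 : 0 ≤ (n:ℝ) ^ 2 * t := mul_nonneg (by positivity) ht0
      positivity
    have hnx : (n:ℝ) * x ≤ (10:ℝ) ^ (-6 : ℤ) := by
      calc (n:ℝ) * x ≤ N * ((10:ℝ) ^ (-6 : ℤ) / N) := by
            apply mul_le_mul hnN hx' hx0 hNpos.le
        _ = (10:ℝ) ^ (-6 : ℤ) := by field_simp
    have hnt : (n:ℝ) ^ 2 * t ≤ (10:ℝ) ^ (-6 : ℤ) := by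
      calc (n:ℝ) ^ 2 * t ≤ (N:ℝ)^2 * ((10:ℝ) ^ (-6 : ℤ) / (N:ℝ)^2) := by
            apply mul_le_mul (by nlinarith) ht' ht0 (by positivity)
        _ = (10:ℝ) ^ (-6 : ℤ) := by field_simp
    have hpi : Real.pi ≤ 4 := Real.pi_le_four
    have hpi0 : 0 < Real.pi := Real.pi_pos
    have h1e6 : (10:ℝ) ^ (-6 : ℤ) = 1/1000000 := by norm_num
    have hθ1 : 2 * Real.pi * (n * x + n ^ 2 * t) ≤ 1 := by
      have hsum : (n:ℝ) * x + n ^ 2 * t ≤ 2/1000000 := by rw [h1e6] at hnx hnt; linarith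
      have hsum0 : 0 ≤ (n:ℝ) * x + n ^ 2 * t := by nlinarith
      nlinarith
    have := Real.one_sub_sq_div_two_le_cos (x := 2 * Real.pi * (n * x + n ^ 2 * t))
    nlinarith
  have hsum : (N:ℝ) / 2 ≤ (weylSum N x t).re := by
    rw [hre]
    calc (N:ℝ)/2 = ∑ _n ∈ Finset.Icc 1 N, (1:ℝ)/2 := by
          simp [Nat.card_Icc]; ring
      _ ≤ _ := Finset.sum_le_sum key
  exact hsum.trans (Complex.re_le_norm _)

/-- on the box `[0, 10⁻⁶ N⁻¹] × [0, 10⁻⁶ N⁻²]` the quadratic Weyl sum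
has size at least `N/2`; in particular `sup_{0<t<1} |w_N(x,·)| ≥ N/2` there. -/
theorem weyl_large_near_origin :
    ∀ N : ℕ, 1 ≤ N → ∀ x ∈ Set.Icc (0:ℝ) ((10:ℝ) ^ (-6 : ℤ) * (N : ℝ)⁻¹),
      (∀ t ∈ Set.Icc (0:ℝ) ((10:ℝ) ^ (-6 : ℤ) * ((N : ℝ) ^ 2)⁻¹),
        (N : ℝ) / 2 ≤ ‖weylSum N x t‖) ∧
      (N : ℝ) / 2 ≤ ⨆ t ∈ Set.Ioo (0:ℝ) 1, ‖weylSum N x t‖ := by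
  intro N hN x hx
  have hNpos : (0:ℝ) < N := by exact_mod_cast hN
  refine ⟨fun t ht => weylSum_large N hN hx.1 hx.2 ht.1 ht.2, ?_⟩
  set t0 : ℝ := (10:ℝ) ^ (-6 : ℤ) * ((N : ℝ) ^ 2)⁻¹ with ht0def
  have ht0pos : 0 < t0 := by positivity
  have ht0lt : t0 < 1 := by
    rw [ht0def]
    have hN1 : (1:ℝ) ≤ (N:ℝ) := by exact_mod_cast hN
    have h1 : (1:ℝ) ≤ (N:ℝ)^2 := by nlinarith
    have : ((N:ℝ)^2)⁻¹ ≤ 1 := by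
      rw [inv_le_one_iff₀]; right; exact h1
    nlinarith [show (0:ℝ) < ((N:ℝ)^2)⁻¹ by positivity]
  have hmem : t0 ∈ Set.Ioo (0:ℝ) 1 := ⟨ht0pos, ht0lt⟩
  have hval : (N : ℝ) / 2 ≤ ‖weylSum N x t0‖ :=
    weylSum_large N hN hx.1 hx.2 ht0pos.le le_rfl
  have hbdd : BddAbove (Set.range fun t => ⨆ _ : t ∈ Set.Ioo (0:ℝ) 1,
      ‖weylSum N x t‖) := by
    refine ⟨N, ?_⟩
    rintro y ⟨t, rfl⟩
    exact Real.iSup_le (fun _ => weylSum_abs_le N x t) hNpos.le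
  calc (N : ℝ) / 2 ≤ ‖weylSum N x t0‖ := hval
    _ = ⨆ _ : t0 ∈ Set.Ioo (0:ℝ) 1, ‖weylSum N x t0‖ := (ciSup_pos (f := fun _ : t0 ∈ Set.Ioo (0:ℝ) 1 => ‖weylSum N x t0‖) hmem).symm
    _ ≤ ⨆ t ∈ Set.Ioo (0:ℝ) 1, ‖weylSum N x t‖ := le_ciSup hbdd t0
end

section
/- There exists an absolute constant c > 0 with the following property. Let N > 1 be a natural number and let q be an odd integer with 1 ≤ q ≤ N^{1/2}. Let a, b be integers with 1 ≤ a, b < q and gcd(a,q) = 1. If x, t are real numbers with |x − b/q| ≤ 1/(100N) and |t − a/q| ≤ 1/(100N²), then |w_N(x,t)| ≥ c N / q^{1/2}. -/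
open Real Set

noncomputable def EE (θ : ℝ) : ℂ := Complex.exp (2 * Real.pi * Complex.I * θ)

lemma EE_eq (θ : ℝ) : EE θ = Complex.exp ((2 * Real.pi * θ : ℝ) * Complex.I) := by
  rw [EE]; congr 1; push_cast; ring

lemma EE_add (θ₁ θ₂ : ℝ) : EE (θ₁ + θ₂) = EE θ₁ * EE θ₂ := by
  rw [EE, EE, EE, ← Complex.exp_add]; congr 1; push_cast; ring

lemma abs_EE (θ : ℝ) : ‖EE θ‖ = 1 := by
  rw [EE_eq]; exact Complex.norm_exp_ofReal_mul_I _

lemma EE_zero : EE 0 = 1 := by simp [EE]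

lemma EE_int (k : ℤ) : EE (k : ℝ) = 1 := by
  rw [EE]
  have : 2 * (Real.pi : ℂ) * Complex.I * ((k : ℝ) : ℂ) = (k : ℂ) * (2 * Real.pi * Complex.I) := by
    push_cast; ring
  rw [this, Complex.exp_int_mul_two_pi_mul_I]

lemma EE_add_int (θ : ℝ) (k : ℤ) : EE (θ + k) = EE θ := by
  rw [EE_add, EE_int, mul_one]

lemma conj_EE (θ : ℝ) : (starRingEnd ℂ) (EE θ) = EE (-θ) := by
  rw [EE_eq, EE_eq, ← Complex.exp_conj]
  congr 1
  simp only [map_mul, Complex.conj_ofReal, Complex.conj_I]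
  push_cast
  ring

lemma abs_EE_sub_one (θ : ℝ) : ‖EE θ - 1‖ ≤ 2 * Real.pi * |θ| := by
  have h := Complex.exp_ofReal_mul_I_re (2 * Real.pi * θ)
  set u := 2 * Real.pi * θ with hu
  have hre : (EE θ - 1).re = Real.cos u - 1 := by
    rw [EE_eq, Complex.sub_re, Complex.one_re, Complex.exp_ofReal_mul_I_re]
  have him : (EE θ - 1).im = Real.sin u := by
    rw [EE_eq, Complex.sub_im, Complex.one_im, Complex.exp_ofReal_mul_I_im, sub_zero]
  have hnormsq : Complex.normSq (EE θ - 1) = 2 - 2 * Real.cos u := by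
    rw [Complex.normSq_apply, hre, him]
    have := Real.sin_sq_add_cos_sq u
    nlinarith [this]
  have hcos : 1 - u ^ 2 / 2 ≤ Real.cos u := Real.one_sub_sq_div_two_le_cos
  have h1 : Complex.normSq (EE θ - 1) ≤ u ^ 2 := by rw [hnormsq]; nlinarith
  rw [Complex.norm_def]
  calc Real.sqrt (Complex.normSq (EE θ - 1)) ≤ Real.sqrt (u ^ 2) := Real.sqrt_le_sqrt h1
    _ = |u| := Real.sqrt_sq_eq_abs u
    _ = 2 * Real.pi * |θ| := by rw [hu, abs_mul]; rw [abs_of_nonneg (by positivity : (0:ℝ) ≤ 2 * Real.pi)]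

lemma abs_EE_sub_EE (θ₁ θ₂ : ℝ) : ‖EE θ₁ - EE θ₂‖ ≤ 2 * Real.pi * |θ₁ - θ₂| := by
  have : EE θ₁ - EE θ₂ = EE θ₂ * (EE (θ₁ - θ₂) - 1) := by
    rw [mul_sub, mul_one, ← EE_add]; ring_nf
  rw [this, norm_mul, abs_EE, one_mul]
  exact abs_EE_sub_one _

lemma EE_re (θ : ℝ) : (EE θ).re = Real.cos (2 * Real.pi * θ) := by
  rw [EE_eq]; exact Complex.exp_ofReal_mul_I_re _

noncomputable def eZ (q : ℕ) (z : ZMod q) : ℂ := EE ((z.val : ℝ) / q)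

lemma EE_int_div (q : ℕ) [NeZero q] (m : ℤ) : EE ((m : ℝ) / q) = eZ q (m : ZMod q) := by
  have hq : (0:ℝ) < q := by
    have := Nat.pos_of_ne_zero (NeZero.ne q); exact_mod_cast this
  have hdvd : (q : ℤ) ∣ (m - ((m : ZMod q).val : ℤ)) := by
    rw [← ZMod.intCast_zmod_eq_zero_iff_dvd]
    push_cast
    rw [ZMod.natCast_val, ZMod.cast_id, sub_self]
  obtain ⟨k, hk⟩ := hdvd
  have hm : (m : ℝ) = ((m : ZMod q).val : ℝ) + k * q := by
    have : (m : ℤ) = ((m : ZMod q).val : ℤ) + k * q := by linarith [hk]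
    exact_mod_cast this
  rw [eZ, hm]
  rw [add_div, mul_div_assoc, div_self hq.ne', mul_one]
  exact EE_add_int _ k

lemma eZ_natCast (q : ℕ) [NeZero q] (m : ℕ) : EE ((m : ℝ) / q) = eZ q (m : ZMod q) := by
  have := EE_int_div q (m : ℤ)
  push_cast at this
  exact this

lemma eZ_add (q : ℕ) [NeZero q] (x y : ZMod q) : eZ q (x + y) = eZ q x * eZ q y := by
  have h1 : x + y = (((x.val + y.val : ℕ) : ℤ) : ZMod q) := by
    push_cast
    rw [ZMod.natCast_val, ZMod.natCast_val, ZMod.cast_id, ZMod.cast_id]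
  rw [h1, ← EE_int_div]
  push_cast
  rw [add_div, EE_add]
  rfl

lemma eZ_zero (q : ℕ) : eZ q 0 = 1 := by
  rw [eZ, ZMod.val_zero]
  push_cast
  rw [zero_div, EE_zero]

lemma conj_eZ (q : ℕ) [NeZero q] (z : ZMod q) : (starRingEnd ℂ) (eZ q z) = eZ q (-z) := by
  rw [eZ, conj_EE]
  have : -((z.val : ℝ) / q) = ((-(z.val : ℤ) : ℤ) : ℝ) / q := by push_cast; ring
  rw [this, EE_int_div]
  congr 1
  push_cast
  rw [ZMod.natCast_val, ZMod.cast_id]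

lemma eZ_ne_one (q : ℕ) [NeZero q] (c : ZMod q) (hc : c ≠ 0) : eZ q c ≠ 1 := by
  intro h
  rw [eZ, EE] at h
  rw [Complex.exp_eq_one_iff] at h
  obtain ⟨n, hn⟩ := h
  push_cast at hn
  have hI : (2 * (Real.pi:ℂ) * Complex.I) ≠ 0 := by
    simp [Complex.I_ne_zero, Real.pi_ne_zero]
  have h2 : ((c.val : ℂ) / (q:ℂ)) = (n : ℂ) :=
    mul_left_cancel₀ hI (hn.trans (by ring))
  have h3 : ((c.val : ℝ) / q) = (n : ℝ) := by
    apply Complex.ofReal_injective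
    push_cast
    exact h2
  have hq : (0:ℝ) < q := by
    have := Nat.pos_of_ne_zero (NeZero.ne q); exact_mod_cast this
  have h4 : (c.val : ℝ) = n * q := by
    rw [div_eq_iff hq.ne'] at h3; exact h3
  have hlt : (c.val : ℝ) < q := by exact_mod_cast ZMod.val_lt c
  have hge : (0:ℝ) ≤ (c.val : ℝ) := by positivity
  have hn0 : n = 0 := by
    rcases lt_trichotomy n 0 with h | h | h
    · exfalso
      have : (n:ℝ) ≤ -1 := by exact_mod_cast (by omega : n ≤ -1)
      nlinarith
    · exact h
    · exfalso
      have : (1:ℝ) ≤ (n:ℝ) := by exact_mod_cast h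
      nlinarith
  rw [hn0] at h4
  have h5 : c.val = 0 := by
    have h6 : ((c.val : ℝ)) = 0 := by rw [h4]; norm_num
    exact_mod_cast h6
  exact hc ((ZMod.val_eq_zero c).mp h5)

lemma sum_eZ_mul (q : ℕ) [NeZero q] (c : ZMod q) (hc : c ≠ 0) :
    ∑ s : ZMod q, eZ q (c * s) = 0 := by
  have key : eZ q c * ∑ s : ZMod q, eZ q (c * s) = ∑ s : ZMod q, eZ q (c * s) := by
    rw [Finset.mul_sum]
    refine Fintype.sum_equiv (Equiv.addRight 1) _ _ (fun s => ?_)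
    rw [← eZ_add]
    congr 1
    simp [Equiv.coe_addRight]
    ring
  have h2 : (eZ q c - 1) * ∑ s : ZMod q, eZ q (c * s) = 0 := by
    rw [sub_mul, one_mul, key, sub_self]
  rcases mul_eq_zero.mp h2 with h | h
  · exact absurd (sub_eq_zero.mp h) (eZ_ne_one q c hc)
  · exact h

lemma sum_eZ_zero (q : ℕ) [NeZero q] : ∑ s : ZMod q, eZ q (0 * s) = (q : ℂ) := by
  simp [zero_mul, eZ_zero, Finset.card_univ, ZMod.card]

lemma gauss_abs (q : ℕ) [NeZero q] (hodd : Odd q) (A B : ZMod q) (hA : IsUnit A) :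
    ‖∑ r : ZMod q, eZ q (A * r ^ 2 + B * r)‖ = Real.sqrt q := by
  set S := ∑ r : ZMod q, eZ q (A * r ^ 2 + B * r) with hS
  have h2u : IsUnit (2 : ZMod q) := by
    have h22 : ((2:ℕ) : ZMod q) = (2 : ZMod q) := by push_cast; ring
    rw [← h22, ZMod.isUnit_iff_coprime]
    exact Nat.coprime_two_left.mpr hodd
  have step : ∀ s : ZMod q, (∑ r : ZMod q, eZ q (A * r ^ 2 + B * r) *
      (starRingEnd ℂ) (eZ q (A * s ^ 2 + B * s))) =
      ∑ h : ZMod q, eZ q (A * h ^ 2 + B * h) * eZ q ((2 * A * h) * s) := by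
    intro s
    refine (Fintype.sum_equiv (Equiv.addRight s) _ _ (fun h => ?_)).symm
    rw [conj_eZ, ← eZ_add, ← eZ_add]
    congr 1
    simp only [Equiv.coe_addRight]
    ring
  have key : S * (starRingEnd ℂ) S = (q : ℂ) := by
    calc S * (starRingEnd ℂ) S
        = ∑ s : ZMod q, ∑ r : ZMod q, eZ q (A * r ^ 2 + B * r) *
            (starRingEnd ℂ) (eZ q (A * s ^ 2 + B * s)) := by
          rw [hS, map_sum, Finset.sum_mul_sum]; exact Finset.sum_comm
      _ = ∑ s : ZMod q, ∑ h : ZMod q, eZ q (A * h ^ 2 + B * h) * eZ q ((2 * A * h) * s) :=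
          Finset.sum_congr rfl (fun s _ => step s)
      _ = ∑ h : ZMod q, ∑ s : ZMod q, eZ q (A * h ^ 2 + B * h) * eZ q ((2 * A * h) * s) :=
          Finset.sum_comm
      _ = ∑ h : ZMod q, eZ q (A * h ^ 2 + B * h) * ∑ s : ZMod q, eZ q ((2 * A * h) * s) :=
          Finset.sum_congr rfl (fun h _ => (Finset.mul_sum _ _ _).symm)
      _ = (q : ℂ) := by
          rw [Finset.sum_eq_single 0]
          · have hz : ∑ s : ZMod q, eZ q (2 * A * 0 * s) = ∑ s : ZMod q, eZ q (0 * s) := by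
              apply Finset.sum_congr rfl; intro s _; congr 1; ring
            rw [hz, sum_eZ_zero]
            norm_num [eZ_zero]
          · intro h _ hne
            rw [sum_eZ_mul q _ (fun hz => hne ((h2u.mul hA).mul_right_eq_zero.mp hz)), mul_zero]
          · intro habs
            exact absurd (Finset.mem_univ 0) habs
  have hnsq : Complex.normSq S = q := by
    have := Complex.mul_conj S
    rw [key] at this
    exact_mod_cast this.symm
  rw [Complex.norm_def, hnsq]

-- grid lemma
lemma sum_grid {α : Type*} [AddCommMonoid α] (f : ℕ → α) (M q : ℕ) :
    ∑ i ∈ Finset.range (M * q), f i = ∑ j ∈ Finset.range M, ∑ i ∈ Finset.range q, f (j * q + i) := by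
  induction M with
  | zero => simp
  | succ M ih =>
    have h1 : (M + 1) * q = M * q + q := by ring
    rw [h1, Finset.range_eq_Ico, ← Finset.sum_Ico_consecutive f (Nat.zero_le (M*q)) (Nat.le_add_right (M*q) q)]
    rw [← Finset.range_eq_Ico, ih, Finset.sum_range_succ]
    congr 1
    rw [Finset.sum_Ico_eq_sum_range]
    simp

lemma sum_Icc_one (f : ℕ → ℂ) (K : ℕ) :
    ∑ n ∈ Finset.Icc 1 K, f n = ∑ i ∈ Finset.range K, f (1 + i) := by
  have : Finset.Icc 1 K = Finset.Ico 1 (K + 1) := by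
    rw [Finset.Ico_add_one_right_eq_Icc]
  rw [this, Finset.sum_Ico_eq_sum_range]
  simp

-- block complete sum
lemma block_sum (q : ℕ) [NeZero q] (A B : ZMod q) (j : ℕ) :
    ∑ i ∈ Finset.range q, eZ q (A * ((1 + (j * q + i) : ℕ) : ZMod q) ^ 2
        + B * ((1 + (j * q + i) : ℕ) : ZMod q)) =
    ∑ r : ZMod q, eZ q (A * r ^ 2 + B * r) := by
  have hcast : ∀ i : ℕ, ((1 + (j * q + i) : ℕ) : ZMod q) = (i : ZMod q) + 1 := by
    intro i
    push_cast
    rw [ZMod.natCast_self]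
    ring
  refine Finset.sum_nbij' (fun i => (i : ZMod q) + 1) (fun z => (z - 1).val) ?_ ?_ ?_ ?_ ?_
  · intro a _; exact Finset.mem_univ _
  · intro z _; exact Finset.mem_range.mpr (ZMod.val_lt _)
  · intro i hi
    simp only [add_sub_cancel_right]
    rw [ZMod.val_natCast, Nat.mod_eq_of_lt (Finset.mem_range.mp hi)]
  · intro z _
    rw [ZMod.natCast_val, ZMod.cast_id, sub_add_cancel]
  · intro i _
    rw [hcast i]

set_option maxHeartbeats 4000000 in
/-- the major-arc lower bound: near a rational point `(b/q, a/q)`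
with `q` odd, `q ≤ N^{1/2}` and `gcd(a,q) = 1`, the Weyl sum has size `≥ c N / √q`. -/
theorem weyl_major_arc_lower_bound :
    ∃ c > (0 : ℝ), ∀ N : ℕ, 1 < N → ∀ q : ℕ, Odd q → 1 ≤ q →
      (q : ℝ) ≤ (N : ℝ) ^ ((1:ℝ)/2) → ∀ a b : ℕ, 1 ≤ a → a < q → 1 ≤ b → b < q →
      Nat.gcd a q = 1 → ∀ x t : ℝ,
      |x - (b : ℝ) / (q : ℝ)| ≤ 1 / (100 * (N : ℝ)) →
      |t - (a : ℝ) / (q : ℝ)| ≤ 1 / (100 * (N : ℝ) ^ 2) →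
      c * (N : ℝ) / Real.sqrt (q : ℝ) ≤ ‖weylSum N x t‖ := by
  refine ⟨1/100, by norm_num, ?_⟩
  intro N hN q hodd hq1 hqN a b ha1 haq hb1 hbq hgcd x t hx ht
  haveI : NeZero q := ⟨by omega⟩
  -- basic numeric facts
  have hq0 : 0 < q := hq1
  have hq3 : 3 ≤ q := by obtain ⟨k, hk⟩ := hodd; omega
  have hqR : (0:ℝ) < q := by exact_mod_cast hq0
  have hNR : (0:ℝ) < N := by positivity
  have hNq : ((q:ℝ))^2 ≤ (N:ℝ) := by
    have h1 : ((N:ℝ) ^ ((1:ℝ)/2))^2 = (N:ℝ) := by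
      rw [← Real.rpow_natCast ((N:ℝ) ^ ((1:ℝ)/2)) 2, ← Real.rpow_mul (by positivity)]
      norm_num
    nlinarith [mul_le_mul hqN hqN hqR.le (Real.rpow_nonneg hNR.le ((1:ℝ)/2))]
  have hq2N : q * q ≤ N := by
    have h1 : ((q*q : ℕ):ℝ) ≤ (N:ℝ) := by push_cast; nlinarith [hNq]
    exact_mod_cast h1
  -- setup
  set β := x - (b:ℝ)/q with hβdef
  set γ := t - (a:ℝ)/q with hγdef
  set A := (a : ZMod q) with hAdef
  set B := (b : ZMod q) with hBdef
  have hA : IsUnit A := (ZMod.isUnit_iff_coprime a q).mpr hgcd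
  set M := N / q with hMdef
  have hMqN : M * q ≤ N := Nat.div_mul_le_self N q
  have hNMq : N < M * q + q := by
    have h1 := Nat.div_add_mod N q
    have h2 : N % q < q := Nat.mod_lt _ hq0
    have h3 : M * q = q * (N / q) := by rw [hMdef, mul_comm]
    omega
  have hMq : q ≤ M := by
    rw [hMdef]
    exact (Nat.le_div_iff_mul_le hq0).mpr hq2N
  have hM1 : 1 ≤ M := le_trans hq1 hMq
  set f : ℕ → ℝ := fun n => n * β + n^2 * γ with hfdef
  set G : ℕ → ℂ := fun n => eZ q (A * ((n : ZMod q))^2 + B * ((n : ZMod q))) with hGdef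
  set S := ∑ r : ZMod q, eZ q (A * r ^ 2 + B * r) with hSdef
  have habsS : ‖S‖ = Real.sqrt q := gauss_abs q hodd A B hA
  set θ : ℕ → ℝ := fun j => f (j * q + (q+1)/2) with hθdef
  -- term identity
  have hterm : ∀ n : ℕ, Complex.exp (2 * Real.pi * Complex.I * (n * x + n ^ 2 * t))
      = G n * EE (f n) := by
    intro n
    have h1 : Complex.exp (2 * Real.pi * Complex.I * (n * x + n ^ 2 * t))
        = EE ((n:ℝ) * x + (n:ℝ)^2 * t) := by
      rw [EE]; congr 1; push_cast; ring
    have h2 : (n:ℝ) * x + (n:ℝ)^2 * t = ((a * n^2 + b * n : ℕ) : ℝ)/q + f n := by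
      rw [hfdef]
      push_cast
      rw [hβdef, hγdef]
      field_simp
      ring
    rw [h1, h2, EE_add, eZ_natCast q]
    have h3 : ((a * n^2 + b * n : ℕ) : ZMod q) = A * ((n : ZMod q))^2 + B * ((n : ZMod q)) := by
      push_cast; ring
    rw [h3]
  -- decomposition
  have hsplit : weylSum N x t = (∑ n ∈ Finset.Icc 1 (M*q), G n * EE (f n))
      + (∑ n ∈ Finset.Icc (M*q+1) N, G n * EE (f n)) := by
    rw [weylSum]
    have h1 : ∀ K : ℕ, ∑ n ∈ Finset.Icc 1 K, Complex.exp (2 * Real.pi * Complex.I * (n * x + n ^ 2 * t))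
        = ∑ n ∈ Finset.Icc 1 K, G n * EE (f n) :=
      fun K => Finset.sum_congr rfl (fun n _ => hterm n)
    rw [h1]
    rw [show (Finset.Icc 1 N) = Finset.Ioc 0 N from (Finset.Icc_add_one_left_eq_Ioc 0 N),
        show (Finset.Icc 1 (M*q)) = Finset.Ioc 0 (M*q) from (Finset.Icc_add_one_left_eq_Ioc 0 (M*q)),
        show (Finset.Icc (M*q+1) N) = Finset.Ioc (M*q) N from (Finset.Icc_add_one_left_eq_Ioc (M*q) N)]
    exact (Finset.sum_Ioc_consecutive _ (Nat.zero_le _) hMqN).symm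
  set head := ∑ n ∈ Finset.Icc 1 (M*q), G n * EE (f n) with hheaddef
  set tail := ∑ n ∈ Finset.Icc (M*q+1) N, G n * EE (f n) with htaildef
  set Main := (∑ j ∈ Finset.range M, EE (θ j)) * S with hMaindef
  -- head as double sum
  have hhead2 : head = ∑ j ∈ Finset.range M, ∑ i ∈ Finset.range q,
      G (1 + (j*q + i)) * EE (f (1 + (j*q + i))) := by
    rw [hheaddef, sum_Icc_one, sum_grid]
  -- block sums give S
  have hblockS : ∀ j : ℕ, ∑ i ∈ Finset.range q, G (1 + (j*q+i)) = S := by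
    intro j
    rw [hSdef, ← block_sum q A B j]
  -- pointwise phase error
  have hβ' : |β| ≤ 1/(100*N) := hx
  have hγ' : |γ| ≤ 1/(100*(N:ℝ)^2) := ht
  have hpt : ∀ j, j < M → ∀ i, i < q → |f (1 + (j*q+i)) - θ j| ≤ 3*q/(200*N) := by
    intro j hj i hi
    obtain ⟨k, hk⟩ := hodd
    have hhalf : (q+1)/2 = k+1 := by omega
    set n := 1 + (j*q+i) with hn
    set m := j*q + (q+1)/2 with hm
    have hnN : n ≤ N := by
      have hjM : j + 1 ≤ M := hj
      have h2 : (j+1)*q ≤ M*q := Nat.mul_le_mul_right q hjM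
      have h4 : (j+1)*q = j*q + q := by ring
      omega
    have hmN : m ≤ N := by
      have : m ≤ j*q + q := by omega
      have h2 : j*q + q ≤ M*q := by
        have h1 : j + 1 ≤ M := by omega
        calc j*q + q = (j+1)*q := by ring
          _ ≤ M*q := Nat.mul_le_mul_right q h1
      omega
    have hd : |(n:ℝ) - m| ≤ (q:ℝ)/2 := by
      have hq2 : (q:ℝ) = 2*(k:ℝ)+1 := by exact_mod_cast congrArg (Nat.cast (R := ℝ)) hk
      have hnr : (n:ℝ) = 1 + ((j:ℝ)*q + i) := by rw [hn]; push_cast; ring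
      have hmr : (m:ℝ) = (j:ℝ)*q + ((k:ℝ)+1) := by rw [hm, hhalf]; push_cast; ring
      have hi2 : i ≤ 2*k := by omega
      have hi' : (i:ℝ) ≤ 2*(k:ℝ) := by exact_mod_cast hi2
      have hi0 : (0:ℝ) ≤ i := by positivity
      rw [abs_le]
      rw [hnr, hmr]
      constructor <;> linarith
    have hnmN : (n:ℝ) + m ≤ 2*N := by
      have h1 : (n:ℝ) ≤ N := by exact_mod_cast hnN
      have h2 : (m:ℝ) ≤ N := by exact_mod_cast hmN
      linarith
    have hdiff : f n - θ j = ((n:ℝ) - m)*β + ((n:ℝ)^2 - (m:ℝ)^2)*γ := by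
      have hθm : θ j = f m := by first | (simp only [hθdef]; rw [hm]) | simp only [hθdef] | rfl
      rw [hθm]
      simp only [hfdef]
      ring
    rw [hdiff]
    have habs1 : |((n:ℝ) - m)*β| ≤ ((q:ℝ)/2) * (1/(100*N)) := by
      rw [abs_mul]
      apply mul_le_mul hd hβ' (abs_nonneg _) (by positivity)
    have habs2 : |((n:ℝ)^2 - (m:ℝ)^2)*γ| ≤ ((q:ℝ)/2) * (2*N) * (1/(100*(N:ℝ)^2)) := by
      rw [abs_mul]
      have h1 : |(n:ℝ)^2 - (m:ℝ)^2| ≤ ((q:ℝ)/2) * (2*N) := by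
        have : (n:ℝ)^2 - (m:ℝ)^2 = ((n:ℝ) - m) * ((n:ℝ) + m) := by ring
        rw [this, abs_mul]
        have h2 : |(n:ℝ) + m| = (n:ℝ) + m := abs_of_nonneg (by positivity)
        rw [h2]
        apply mul_le_mul hd hnmN (by positivity) (by positivity)
      apply mul_le_mul h1 hγ' (abs_nonneg _) (by positivity)
    calc |((n:ℝ) - m)*β + ((n:ℝ)^2 - (m:ℝ)^2)*γ|
        ≤ |((n:ℝ) - m)*β| + |((n:ℝ)^2 - (m:ℝ)^2)*γ| := abs_add_le _ _
      _ ≤ ((q:ℝ)/2) * (1/(100*N)) + ((q:ℝ)/2) * (2*N) * (1/(100*(N:ℝ)^2)) := by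
          linarith
      _ = 3*q/(200*N) := by field_simp; ring
  -- error bound head vs Main
  have herr : ‖head - Main‖ ≤ (M:ℝ) * ((q:ℝ) * (2*π*(3*q/(200*N)))) := by
    rw [hhead2, hMaindef, Finset.sum_mul, ← Finset.sum_sub_distrib]
    calc ‖∑ j ∈ Finset.range M, ((∑ i ∈ Finset.range q,
            G (1 + (j*q + i)) * EE (f (1 + (j*q + i)))) - EE (θ j) * S)‖
        ≤ ∑ j ∈ Finset.range M, ‖(∑ i ∈ Finset.range q,
            G (1 + (j*q + i)) * EE (f (1 + (j*q + i)))) - EE (θ j) * S‖ :=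
          norm_sum_le _ _
      _ ≤ ∑ j ∈ Finset.range M, ((q:ℝ) * (2*π*(3*q/(200*N)))) := by
          apply Finset.sum_le_sum
          intro j hj
          have hj' : j < M := Finset.mem_range.mp hj
          have hS' : EE (θ j) * S = ∑ i ∈ Finset.range q, G (1 + (j*q+i)) * EE (θ j) := by
            rw [← hblockS j, Finset.mul_sum]
            apply Finset.sum_congr rfl
            intro i _
            ring
          rw [hS', ← Finset.sum_sub_distrib]
          calc ‖∑ i ∈ Finset.range q,
                (G (1 + (j*q + i)) * EE (f (1 + (j*q + i))) - G (1 + (j*q+i)) * EE (θ j))‖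
              ≤ ∑ i ∈ Finset.range q, ‖
                G (1 + (j*q + i)) * EE (f (1 + (j*q + i))) - G (1 + (j*q+i)) * EE (θ j)‖ :=
                norm_sum_le _ _
            _ ≤ ∑ i ∈ Finset.range q, (2*π*(3*q/(200*N))) := by
                apply Finset.sum_le_sum
                intro i hi
                have hi' : i < q := Finset.mem_range.mp hi
                rw [← mul_sub, norm_mul]
                have hG1 : ‖G (1 + (j*q+i))‖ = 1 := by
                  rw [hGdef]; exact abs_EE _
                rw [hG1, one_mul]
                calc ‖EE (f (1 + (j*q + i))) - EE (θ j)‖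
                    ≤ 2*π*|f (1 + (j*q+i)) - θ j| := abs_EE_sub_EE _ _
                  _ ≤ 2*π*(3*q/(200*N)) := by
                      apply mul_le_mul_of_nonneg_left (hpt j hj' i hi') (by positivity)
            _ = (q:ℝ) * (2*π*(3*q/(200*N))) := by
                rw [Finset.sum_const, Finset.card_range]; simp [nsmul_eq_mul]
      _ = (M:ℝ) * ((q:ℝ) * (2*π*(3*q/(200*N)))) := by
          rw [Finset.sum_const, Finset.card_range]; simp [nsmul_eq_mul]
  -- lower bound on Main
  have hθbound : ∀ j, j < M → |θ j| ≤ 1/50 := by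
    intro j hj
    rw [hθdef, hfdef]
    set m := j*q + (q+1)/2 with hm
    have hmN : m ≤ N := by
      have h1 : j + 1 ≤ M := by omega
      have : m ≤ j*q + q := by omega
      have h2 : j*q + q ≤ M*q := by
        calc j*q + q = (j+1)*q := by ring
          _ ≤ M*q := Nat.mul_le_mul_right q h1
      omega
    have hmR : (m:ℝ) ≤ N := by exact_mod_cast hmN
    have hm0 : (0:ℝ) ≤ m := by positivity
    calc |(m:ℝ) * β + (m:ℝ)^2 * γ| ≤ |(m:ℝ)*β| + |(m:ℝ)^2*γ| := abs_add_le _ _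
      _ ≤ (N:ℝ)*(1/(100*N)) + (N:ℝ)^2*(1/(100*(N:ℝ)^2)) := by
          rw [abs_mul, abs_mul]
          have h1 : |(m:ℝ)| ≤ N := by rw [abs_of_nonneg hm0]; exact hmR
          have h2 : |(m:ℝ)^2| ≤ (N:ℝ)^2 := by
            rw [abs_of_nonneg (by positivity)]
            apply pow_le_pow_left₀ hm0 hmR
          apply add_le_add
          · apply mul_le_mul h1 hβ' (abs_nonneg _) (by positivity)
          · apply mul_le_mul h2 hγ' (abs_nonneg _) (by positivity)
      _ = 1/50 := by field_simp; ring
  have hre : ∀ j, j < M → (0.992 : ℝ) ≤ (EE (θ j)).re := by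
    intro j hj
    rw [EE_re]
    have h1 : 1 - (2*π*θ j)^2/2 ≤ Real.cos (2*π*θ j) := Real.one_sub_sq_div_two_le_cos
    have h2 : |θ j| ≤ 1/50 := hθbound j hj
    have habs := abs_le.mp h2
    have hπ : π < 3.15 := Real.pi_lt_d2
    have hπ0 : 0 < π := Real.pi_pos
    have hθ2 : (θ j)^2 ≤ (1/50)^2 := by nlinarith [habs.1, habs.2]
    have hπ2 : π^2 ≤ 3.15^2 := by nlinarith [hπ0, hπ]
    have hsq : (2*π*θ j)^2 ≤ 4*(3.15^2)*(1/50)^2 := by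
      have he : (2*π*θ j)^2 = 4*π^2*(θ j)^2 := by ring
      rw [he]
      have g1 : π^2*(θ j)^2 ≤ 3.15^2*(1/50)^2 := by
        apply mul_le_mul hπ2 hθ2 (sq_nonneg _) (by norm_num)
      linarith
    nlinarith [h1, hsq]
  have hmain : (0.992:ℝ) * M * Real.sqrt q ≤ ‖Main‖ := by
    rw [hMaindef, norm_mul, habsS]
    apply mul_le_mul_of_nonneg_right _ (Real.sqrt_nonneg _)
    calc (0.992:ℝ) * M = ∑ j ∈ Finset.range M, (0.992:ℝ) := by
          rw [Finset.sum_const, Finset.card_range]; simp [nsmul_eq_mul]; ring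
      _ ≤ ∑ j ∈ Finset.range M, (EE (θ j)).re := Finset.sum_le_sum (fun j hj => hre j (Finset.mem_range.mp hj))
      _ = (∑ j ∈ Finset.range M, EE (θ j)).re := (Complex.re_sum _ _).symm
      _ ≤ ‖∑ j ∈ Finset.range M, EE (θ j)‖ := Complex.re_le_norm _
  -- tail bound
  have htail : ‖tail‖ ≤ (q:ℝ) - 1 := by
    rw [htaildef]
    calc ‖∑ n ∈ Finset.Icc (M*q+1) N, G n * EE (f n)‖
        ≤ ∑ n ∈ Finset.Icc (M*q+1) N, ‖G n * EE (f n)‖ := norm_sum_le _ _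
      _ = ∑ n ∈ Finset.Icc (M*q+1) N, (1:ℝ) := by
          apply Finset.sum_congr rfl
          intro n _
          rw [norm_mul]
          have hG1 : ‖G n‖ = 1 := by rw [hGdef]; exact abs_EE _
          rw [hG1, abs_EE, mul_one]
      _ = ((Finset.Icc (M*q+1) N).card : ℝ) := by rw [Finset.sum_const]; simp
      _ ≤ (q:ℝ) - 1 := by
          rw [Nat.card_Icc]
          have h1 : N + 1 - (M*q+1) = N - M*q := by omega
          rw [h1]
          have h2 : N - M*q ≤ q - 1 := by omega
          have h3 : ((N - M*q : ℕ):ℝ) ≤ ((q - 1 : ℕ):ℝ) := by exact_mod_cast h2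
          have h4 : ((q - 1 : ℕ):ℝ) = (q:ℝ) - 1 := by
            have : 1 ≤ q := hq1
            push_cast [this]
            ring
          linarith
  -- error simplification
  have hπ : π < 3.15 := Real.pi_lt_d2
  have hπ0 : 0 < π := Real.pi_pos
  have herr2 : (M:ℝ) * ((q:ℝ) * (2*π*(3*q/(200*N)))) ≤ 0.0945*(q:ℝ) := by
    have hMq' : (M:ℝ)*q ≤ N := by exact_mod_cast hMqN
    have h1 : (M:ℝ) * ((q:ℝ) * (2*π*(3*q/(200*N)))) = ((M:ℝ)*q) * (π*(6*q/(200*N))) := by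
      ring
    rw [h1]
    have h2 : ((M:ℝ)*q) * (π*(6*q/(200*N))) ≤ (N:ℝ) * (π*(6*q/(200*N))) := by
      apply mul_le_mul_of_nonneg_right hMq' (by positivity)
    have h3 : (N:ℝ) * (π*(6*q/(200*N))) = π * (6*q/200) := by
      field_simp
    have h4 : π * (6*(q:ℝ)/200) ≤ 3.15 * (6*q/200) := by
      apply mul_le_mul_of_nonneg_right hπ.le (by positivity)
    calc ((M:ℝ)*q) * (π*(6*q/(200*N))) ≤ (N:ℝ) * (π*(6*q/(200*N))) := h2
      _ = π * (6*(q:ℝ)/200) := h3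
      _ ≤ 3.15 * (6*(q:ℝ)/200) := h4
      _ = 0.0945*(q:ℝ) := by ring
  -- assemble
  have htri : (0.992:ℝ) * M * Real.sqrt q - 0.0945*q - ((q:ℝ) - 1)
      ≤ ‖weylSum N x t‖ := by
    have h2 : Main = weylSum N x t - (head - Main) - tail := by
      rw [hsplit]; ring
    have h1 : ‖Main‖ ≤ ‖weylSum N x t‖
        + ‖head - Main‖ + ‖tail‖ := by
      have h3 := norm_sub_le (weylSum N x t - (head - Main)) tail
      have h4 := norm_sub_le (weylSum N x t) (head - Main)
      calc ‖Main‖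
          = ‖weylSum N x t - (head - Main) - tail‖ := congrArg (‖·‖) h2
        _ ≤ ‖weylSum N x t - (head - Main)‖ + ‖tail‖ := h3
        _ ≤ ‖weylSum N x t‖ + ‖head - Main‖ + ‖tail‖ := by
            linarith
    linarith [hmain, herr, herr2, htail, h1]
  -- final numeric
  set s := Real.sqrt (q:ℝ) with hsdef
  have hs2 : s^2 = q := Real.sq_sqrt hqR.le
  have hs0 : 0 < s := Real.sqrt_pos.mpr hqR
  have hs3 : 3 ≤ s^2 := by rw [hs2]; exact_mod_cast hq3
  have hs17 : (1.73:ℝ) ≤ s := by nlinarith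
  have hMqlow : (N:ℝ) - q < (M:ℝ)*q := by
    have : (N:ℝ) < (M:ℝ)*q + q := by exact_mod_cast hNMq
    linarith
  rw [div_le_iff₀ hs0]
  have hW0 : (0:ℝ) ≤ ‖weylSum N x t‖ := norm_nonneg _
  have hkey : (1/100:ℝ) * N ≤ ((0.992:ℝ) * M * s - 0.0945*q - ((q:ℝ) - 1)) * s := by
    have hMs : (0.992:ℝ) * M * s * s = 0.992 * ((M:ℝ)*q) := by
      rw [mul_assoc, ← pow_two, hs2]; ring
    have hexp : ((0.992:ℝ) * M * s - 0.0945*q - ((q:ℝ) - 1)) * s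
        = 0.992 * ((M:ℝ)*q) - 0.0945*q*s - ((q:ℝ)-1)*s := by
      rw [sub_mul, sub_mul]
      rw [hMs]
    rw [hexp]
    have hq_s : (q:ℝ) = s^2 := hs2.symm
    have hNs : s^4 ≤ (N:ℝ) := by
      have : ((q:ℝ))^2 ≤ N := hNq
      nlinarith
    have hg : (0:ℝ) ≤ 0.982*s^2 - 1.0945*s - 0.992 := by nlinarith [sq_nonneg (s - 1.73)]
    have hg2 := mul_nonneg (sq_nonneg s) hg
    nlinarith [hMqlow, hNs, hg2, hs0.le]
  calc (1/100:ℝ) * N ≤ ((0.992:ℝ) * M * s - 0.0945*q - ((q:ℝ) - 1)) * s := hkey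
    _ ≤ ‖weylSum N x t‖ * s := by
        apply mul_le_mul_of_nonneg_right htri hs0.le
end
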